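/- Let L be a Lie algebra over a field K and S a linear subspace of L. Let N be the set of elements x ∈ L that are locally S-nilpotent, i.e. ad(S)^{n+1}(x) = 0 for some n (where ad(S)^k(x) denotes the span of all iterated brackets [s_k, [..., [s_1, x]...]] with s_i ∈ S). Then N is a Lie subalgebra of L. -/
import Mathlib


variable (K L : Type*) [Field K] [LieRing L] [LieAlgebra K L]

/-- `adSpan K L S V` is the span of all brackets `⁅s, v⁆` with `s ∈ S`, `v ∈ V`. -/
def adSpan (S V : Submodule K L) : Submodule K L :=
  Submodule.span K {z : L | ∃ s ∈ S, ∃ v ∈ V, z = ⁅s, v⁆}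

/-- `adPow K L S n V = ad(S)ⁿ(V)`, the span of `n`-fold iterated brackets
`⁅sₙ, ⁅…, ⁅s₁, v⁆…⁆⁆` with `sᵢ ∈ S`, `v ∈ V`. -/
def adPow (S : Submodule K L) : ℕ → Submodule K L → Submodule K L
  | 0, V => V
  | (n + 1), V => adSpan K L S (adPow S n V)

namespace LocNilpAux

variable {K L}

lemma adSpan_le {S V P : Submodule K L}
    (h : ∀ s ∈ S, ∀ v ∈ V, ⁅s, v⁆ ∈ P) : adSpan K L S V ≤ P := by
  refine Submodule.span_le.2 ?_
  rintro z ⟨s, hs, v, hv, rfl⟩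
  exact h s hs v hv

lemma mem_adSpan {S V : Submodule K L} {s v : L} (hs : s ∈ S) (hv : v ∈ V) :
    ⁅s, v⁆ ∈ adSpan K L S V :=
  Submodule.subset_span ⟨s, hs, v, hv, rfl⟩

lemma adSpan_mono {S V V' : Submodule K L} (h : V ≤ V') :
    adSpan K L S V ≤ adSpan K L S V' :=
  adSpan_le fun s hs v hv => mem_adSpan hs (h hv)

lemma adSpan_bot {S : Submodule K L} : adSpan K L S ⊥ = ⊥ := by
  refine le_bot_iff.mp (adSpan_le ?_)
  intro s _ v hv
  simp only [Submodule.mem_bot] at hv ⊢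
  simp [hv]

lemma adSpan_sup_le {S V W : Submodule K L} :
    adSpan K L S (V ⊔ W) ≤ adSpan K L S V ⊔ adSpan K L S W := by
  refine adSpan_le ?_
  intro s hs v hv
  obtain ⟨a, ha, b, hb, rfl⟩ := Submodule.mem_sup.mp hv
  rw [lie_add]
  exact add_mem (Submodule.mem_sup_left (mem_adSpan hs ha))
    (Submodule.mem_sup_right (mem_adSpan hs hb))

lemma adPow_mono {S : Submodule K L} (n : ℕ) {V V' : Submodule K L} (h : V ≤ V') :
    adPow K L S n V ≤ adPow K L S n V' := by
  induction n with
  | zero => exact h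
  | succ n ih => exact adSpan_mono ih

lemma adPow_bot {S : Submodule K L} (n : ℕ) : adPow K L S n ⊥ = ⊥ := by
  induction n with
  | zero => rfl
  | succ n ih => show adSpan K L S _ = ⊥; rw [ih, adSpan_bot]

lemma adPow_add {S : Submodule K L} (m n : ℕ) (V : Submodule K L) :
    adPow K L S (m + n) V = adPow K L S n (adPow K L S m V) := by
  induction n with
  | zero => rfl
  | succ n ih => exact congrArg (adSpan K L S) ih

lemma adPow_eq_bot_of_le {S V : Submodule K L} {m j : ℕ} (hmj : m ≤ j)
    (h : adPow K L S m V = ⊥) : adPow K L S j V = ⊥ := by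
  obtain ⟨k, rfl⟩ := Nat.exists_eq_add_of_le hmj
  rw [adPow_add, h, adPow_bot]

lemma adPow_sup_le {S : Submodule K L} (n : ℕ) {V W : Submodule K L} :
    adPow K L S n (V ⊔ W) ≤ adPow K L S n V ⊔ adPow K L S n W := by
  induction n with
  | zero => exact le_rfl
  | succ n ih =>
    calc adPow K L S (n+1) (V ⊔ W) ≤ adSpan K L S (adPow K L S n V ⊔ adPow K L S n W) :=
          adSpan_mono ih
      _ ≤ _ := adSpan_sup_le

/-- Span of all brackets `⁅v, w⁆` with `v ∈ V`, `w ∈ W`. -/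
def bracketSpan (V W : Submodule K L) : Submodule K L :=
  Submodule.span K {z : L | ∃ v ∈ V, ∃ w ∈ W, z = ⁅v, w⁆}

lemma bracketSpan_le {V W P : Submodule K L}
    (h : ∀ v ∈ V, ∀ w ∈ W, ⁅v, w⁆ ∈ P) : bracketSpan V W ≤ P := by
  refine Submodule.span_le.2 ?_
  rintro z ⟨v, hv, w, hw, rfl⟩
  exact h v hv w hw

lemma mem_bracketSpan {V W : Submodule K L} {v w : L} (hv : v ∈ V) (hw : w ∈ W) :
    ⁅v, w⁆ ∈ bracketSpan V W :=
  Submodule.subset_span ⟨v, hv, w, hw, rfl⟩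

lemma bracketSpan_bot_left {W : Submodule K L} : bracketSpan (⊥ : Submodule K L) W = ⊥ := by
  refine le_bot_iff.mp (bracketSpan_le ?_)
  intro v hv w _
  simp only [Submodule.mem_bot] at hv ⊢
  simp [hv]

lemma bracketSpan_bot_right {V : Submodule K L} : bracketSpan V (⊥ : Submodule K L) = ⊥ := by
  refine le_bot_iff.mp (bracketSpan_le ?_)
  intro v _ w hw
  simp only [Submodule.mem_bot] at hw ⊢
  simp [hw]

lemma adSpan_bracketSpan_le {S V W : Submodule K L} :
    adSpan K L S (bracketSpan V W)
      ≤ bracketSpan (adSpan K L S V) W ⊔ bracketSpan V (adSpan K L S W) := by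
  refine adSpan_le ?_
  intro s hs u hu
  induction hu using Submodule.span_induction with
  | mem z hz =>
    obtain ⟨v, hv, w, hw, rfl⟩ := hz
    rw [leibniz_lie]
    exact add_mem (Submodule.mem_sup_left (mem_bracketSpan (mem_adSpan hs hv) hw))
      (Submodule.mem_sup_right (mem_bracketSpan hv (mem_adSpan hs hw)))
  | zero => rw [lie_zero]; exact zero_mem _
  | add a b _ _ ha hb => rw [lie_add]; exact add_mem ha hb
  | smul c a _ ha => rw [lie_smul]; exact Submodule.smul_mem _ c ha

lemma adSpan_finsetSup_le {S : Submodule K L} {ι : Type*} (t : Finset ι)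
    (f : ι → Submodule K L) :
    adSpan K L S (t.sup f) ≤ t.sup (fun i => adSpan K L S (f i)) := by
  induction t using Finset.cons_induction with
  | empty => simp [adSpan_bot]
  | cons a t ha ih =>
    rw [Finset.sup_cons, Finset.sup_cons]
    exact le_trans adSpan_sup_le (sup_le_sup le_rfl ih)

lemma adPow_bracketSpan_le {S : Submodule K L} (V W : Submodule K L) (n : ℕ) :
    adPow K L S n (bracketSpan V W)
      ≤ (Finset.range (n+1)).sup
          (fun i => bracketSpan (adPow K L S i V) (adPow K L S (n - i) W)) := by
  induction n with
  | zero =>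
    have h := Finset.le_sup (f := fun i =>
      bracketSpan (adPow K L S i V) (adPow K L S (0 - i) W))
      (Finset.mem_range.mpr Nat.zero_lt_one)
    exact h
  | succ n ih =>
    calc adPow K L S (n+1) (bracketSpan V W)
        ≤ adSpan K L S ((Finset.range (n+1)).sup
            (fun i => bracketSpan (adPow K L S i V) (adPow K L S (n - i) W))) :=
          adSpan_mono ih
      _ ≤ (Finset.range (n+1)).sup
            (fun i => adSpan K L S (bracketSpan (adPow K L S i V) (adPow K L S (n - i) W))) :=
          adSpan_finsetSup_le _ _
      _ ≤ _ := by
          refine Finset.sup_le ?_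
          intro i hi
          rw [Finset.mem_range] at hi
          have hi' : i ≤ n := Nat.lt_succ_iff.mp hi
          refine le_trans adSpan_bracketSpan_le (sup_le ?_ ?_)
          · have h1 : n + 1 - (i + 1) = n - i := by omega
            have := Finset.le_sup (f := fun j =>
              bracketSpan (adPow K L S j V) (adPow K L S (n + 1 - j) W))
              (Finset.mem_range.mpr (by omega : i + 1 < n + 2))
            simp only [h1] at this
            exact this
          · have h2 : n + 1 - i = (n - i) + 1 := by omega
            have := Finset.le_sup (f := fun j =>
              bracketSpan (adPow K L S j V) (adPow K L S (n + 1 - j) W))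
              (Finset.mem_range.mpr (by omega : i < n + 2))
            simp only [h2] at this
            exact this

end LocNilpAux

open LocNilpAux in
/-- Let `S` be a linear subspace of a Lie algebra `L`.  The set `N` of locally
`S`-nilpotent elements `x` (those with `ad(S)^{n+1}(x) = 0` for some `n`) is a
Lie subalgebra of `L`. -/
theorem locallyNilpotent_is_lieSubalgebra (S : Submodule K L) :
    ∃ N : LieSubalgebra K L,
      (N : Set L)
        = {x : L | ∃ n : ℕ, adPow K L S (n + 1) (Submodule.span K {x}) = ⊥} := by
  refine ⟨{ carrier := {x : L | ∃ n : ℕ, adPow K L S (n + 1) (Submodule.span K {x}) = ⊥}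
            add_mem' := ?_
            zero_mem' := ?_
            smul_mem' := ?_
            lie_mem' := ?_ }, rfl⟩
  · rintro x y ⟨a, ha⟩ ⟨b, hb⟩
    refine ⟨max a b, ?_⟩
    have hxy : Submodule.span K {x + y} ≤ Submodule.span K {x} ⊔ Submodule.span K {y} := by
      rw [Submodule.span_le, Set.singleton_subset_iff]
      exact add_mem (Submodule.mem_sup_left (Submodule.mem_span_singleton_self x))
        (Submodule.mem_sup_right (Submodule.mem_span_singleton_self y))
    refine le_bot_iff.mp ?_
    calc adPow K L S (max a b + 1) (Submodule.span K {x + y})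
        ≤ adPow K L S (max a b + 1) (Submodule.span K {x} ⊔ Submodule.span K {y}) :=
          adPow_mono _ hxy
      _ ≤ adPow K L S (max a b + 1) (Submodule.span K {x})
            ⊔ adPow K L S (max a b + 1) (Submodule.span K {y}) := adPow_sup_le _
      _ ≤ ⊥ := by
          rw [adPow_eq_bot_of_le (by omega) ha, adPow_eq_bot_of_le (by omega) hb]
          simp
  · refine ⟨0, ?_⟩
    rw [Submodule.span_zero_singleton]
    exact adPow_bot 1
  · rintro c x ⟨a, ha⟩
    refine ⟨a, ?_⟩
    refine le_bot_iff.mp ?_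
    rw [← ha]
    refine adPow_mono _ ?_
    rw [Submodule.span_le, Set.singleton_subset_iff]
    exact Submodule.smul_mem _ c (Submodule.mem_span_singleton_self x)
  · rintro x y ⟨a, ha⟩ ⟨b, hb⟩
    refine ⟨a + b + 1, ?_⟩
    have hxy : Submodule.span K {⁅x, y⁆}
        ≤ bracketSpan (Submodule.span K {x}) (Submodule.span K {y}) := by
      rw [Submodule.span_le, Set.singleton_subset_iff]
      exact mem_bracketSpan (Submodule.mem_span_singleton_self x)
        (Submodule.mem_span_singleton_self y)
    refine le_bot_iff.mp ?_
    calc adPow K L S (a + b + 2) (Submodule.span K {⁅x, y⁆})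
        ≤ adPow K L S (a + b + 2) (bracketSpan (Submodule.span K {x}) (Submodule.span K {y})) :=
          adPow_mono _ hxy
      _ ≤ (Finset.range (a + b + 3)).sup
            (fun i => bracketSpan (adPow K L S i (Submodule.span K {x}))
              (adPow K L S (a + b + 2 - i) (Submodule.span K {y}))) :=
          adPow_bracketSpan_le _ _ _
      _ ≤ ⊥ := by
          refine Finset.sup_le ?_
          intro i _
          rcases le_or_gt (a + 1) i with h | h
          · rw [adPow_eq_bot_of_le h ha, bracketSpan_bot_left]
          · rw [adPow_eq_bot_of_le (by omega : b + 1 ≤ a + b + 2 - i) hb, bracketSpan_bot_right]
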